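/- Let u_A, u_D : ℝⁿ × ℝᵐ → ℝ be C², and let β : ℝⁿ × [0,T] → ℝᵐ be C² and satisfy ∂_t β(α,t) = ∂_β u_A(α, β(α,t)) for all t ∈ [0,T]. Suppose λ : [0,T] → ℝᵐ (a row vector / covector) satisfies the adjoint ODE dλ/dt = -λ(t) ∂²_β u_A(α, β(α,t)) with terminal condition λ(T) = -∂_β u_D(α, β(α,T)). Then the total derivative of α ↦ u_D(α, β(α,T)) equals ∂_α u_D(α, β(α,T)) - ∫₀ᵀ λ(t) ∂_α ∂_β u_A(α, β(α,t)) dt. -/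

import Mathlib

open scoped Topology

private abbrev XEsp (n : ℕ) : Type := EuclideanSpace ℝ (Fin n)

set_option maxHeartbeats 1000000 in
open ContinuousLinearMap in
/-- Adjoint method for the PDE-constrained reformulation of the Stackelberg game.
If `β(a,t)` follows the gradient-ascent flow of the attacker utility in `β`,
starting from `β(a,0) = 0`, and the adjoint covector `λ` solves
`λ' t = -λ(t) ∘ ∂²_β u_A(α, β(α,t))` with terminal condition
`λ T = -∂_β u_D(α, β(α,T))`, then the total derivative of `a ↦ u_D(a, β(a,T))`
at `α` equals `∂_α u_D(α, β(α,T)) - ∫₀ᵀ λ(t) ∘ ∂_α ∂_β u_A(α, β(α,t)) dt`. -/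
theorem stmt6 (n m : ℕ)
    (uA uD : EuclideanSpace ℝ (Fin n) → EuclideanSpace ℝ (Fin m) → ℝ)
    (huA : ContDiff ℝ 2 (Function.uncurry uA))
    (huD : ContDiff ℝ 2 (Function.uncurry uD))
    (gA : EuclideanSpace ℝ (Fin n) → EuclideanSpace ℝ (Fin m) →
      EuclideanSpace ℝ (Fin m))
    (hgA : ∀ a b, gA a b = gradient (uA a) b)
    (T : ℝ) (hT : 0 < T)
    (β : EuclideanSpace ℝ (Fin n) → ℝ → EuclideanSpace ℝ (Fin m))
    (hβsmooth : ContDiff ℝ 2 (fun p : EuclideanSpace ℝ (Fin n) × ℝ => β p.1 p.2))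
    (hinit : ∀ a, β a 0 = 0)
    (hflow : ∀ a t, t ∈ Set.Icc (0 : ℝ) T → HasDerivAt (β a) (gA a (β a t)) t)
    (α : EuclideanSpace ℝ (Fin n))
    (lam : ℝ → (EuclideanSpace ℝ (Fin m) →L[ℝ] ℝ))
    (hadj : ∀ t ∈ Set.Icc (0 : ℝ) T,
      HasDerivAt lam (-(lam t).comp (fderiv ℝ (gA α) (β α t))) t)
    (hterm : lam T = -(fderiv ℝ (uD α) (β α T))) :
    fderiv ℝ (fun a => uD a (β a T)) α =
      fderiv ℝ (fun a => uD a (β α T)) α -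
        ∫ t in (0 : ℝ)..T, (lam t).comp
          (fderiv ℝ (fun a => gA a (β α t)) α) := by
  have hT0 : (0:ℝ) ≤ T := hT.le
  -- the joint flow map and its derivatives
  set B : XEsp n × ℝ → XEsp m := fun p => β p.1 p.2 with hBdef
  have hB : ContDiff ℝ 2 B := hβsmooth
  have hBdiff : Differentiable ℝ B := hB.differentiable two_ne_zero
  have hΦ : ContDiff ℝ 1 (fderiv ℝ B) := hB.fderiv_right (m := 1) (by norm_num)
  have hΦdiff : Differentiable ℝ (fderiv ℝ B) := hΦ.differentiable one_ne_zero
  -- slices of B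
  have hslicea : ∀ (a : XEsp n) (t : ℝ),
      HasFDerivAt (fun x : XEsp n => β x t) ((fderiv ℝ B (a, t)).comp (inl ℝ (XEsp n) ℝ)) a :=
    fun a t => by have h := ((hBdiff (a, t)).hasFDerivAt.comp a (hasFDerivAt_prodMk_left (𝕜 := ℝ) a t)); exact h
  have hslicet : ∀ (a : XEsp n) (t : ℝ),
      HasDerivAt (β a) (fderiv ℝ B (a, t) ((0 : XEsp n), (1 : ℝ))) t :=
    fun a t => (hBdiff (a, t)).hasFDerivAt.comp_hasDerivAt t
      ((hasDerivAt_const t a).prodMk (hasDerivAt_id t))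
  have hflow' : ∀ (a : XEsp n), ∀ t ∈ Set.Icc (0:ℝ) T,
      gA a (β a t) = fderiv ℝ B (a, t) ((0 : XEsp n), (1 : ℝ)) :=
    fun a t ht => (hflow a t ht).unique (hslicet a t)
  set D : ℝ → (XEsp n →L[ℝ] XEsp m) := fun t => (fderiv ℝ B (α, t)).comp (inl ℝ (XEsp n) ℝ) with hDdef
  have hDt : ∀ t : ℝ, HasFDerivAt (fun a : XEsp n => β a t) (D t) α := fun t => hslicea α t
  -- gA is jointly C¹
  have hUAdiff : Differentiable ℝ (Function.uncurry uA) := huA.differentiable two_ne_zero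
  have hgA_eq : ∀ (a : XEsp n) (b : XEsp m), gA a b =
      (InnerProductSpace.toDual ℝ (XEsp m)).symm
        ((fderiv ℝ (Function.uncurry uA) (a, b)).comp (inr ℝ (XEsp n) (XEsp m))) := by
    intro a b
    rw [hgA]
    show (InnerProductSpace.toDual ℝ (XEsp m)).symm (fderiv ℝ (uA a) b) = _
    congr 1
    have h := ((hUAdiff (a, b)).hasFDerivAt.comp b (hasFDerivAt_prodMk_right (𝕜 := ℝ) a b)).fderiv; exact h
  set K : XEsp n × XEsp m → XEsp m := fun q => gA q.1 q.2 with hKdef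
  have hK : ContDiff ℝ 1 K := by
    have : K = fun q : XEsp n × XEsp m =>
        (InnerProductSpace.toDual ℝ (XEsp m)).symm
          (((ContinuousLinearMap.compL ℝ (XEsp m) (XEsp n × XEsp m) ℝ).flip (inr ℝ (XEsp n) (XEsp m)))
            (fderiv ℝ (Function.uncurry uA) q)) := by
      funext q
      exact hgA_eq q.1 q.2
    rw [this]
    exact (InnerProductSpace.toDual ℝ (XEsp m)).symm.contDiff.comp
      ((((ContinuousLinearMap.compL ℝ (XEsp m) (XEsp n × XEsp m) ℝ).flip (inr ℝ (XEsp n) (XEsp m))).contDiff).comp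
        (huA.fderiv_right (m := 1) (by norm_num)))
  have hKdiff : Differentiable ℝ K := hK.differentiable one_ne_zero
  -- partial derivatives of K
  have hKa : ∀ (a : XEsp n) (b : XEsp m),
      HasFDerivAt (fun x : XEsp n => gA x b) ((fderiv ℝ K (a, b)).comp (inl ℝ (XEsp n) (XEsp m))) a :=
    fun a b => by have h := (hKdiff (a, b)).hasFDerivAt.comp a (hasFDerivAt_prodMk_left (𝕜 := ℝ) a b); exact h
  have hKb : ∀ (a : XEsp n) (b : XEsp m),
      HasFDerivAt (gA a) ((fderiv ℝ K (a, b)).comp (inr ℝ (XEsp n) (XEsp m))) b :=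
    fun a b => by have h := (hKdiff (a, b)).hasFDerivAt.comp b (hasFDerivAt_prodMk_right (𝕜 := ℝ) a b); exact h
  set At : ℝ → (XEsp m →L[ℝ] XEsp m) := fun t => (fderiv ℝ K (α, β α t)).comp (inr ℝ (XEsp n) (XEsp m)) with hAtdef
  set Ht : ℝ → (XEsp n →L[ℝ] XEsp m) := fun t => (fderiv ℝ K (α, β α t)).comp (inl ℝ (XEsp n) (XEsp m)) with hHtdef
  have hHt_eq : ∀ t : ℝ, fderiv ℝ (fun a : XEsp n => gA a (β α t)) α = Ht t :=
    fun t => (hKa α (β α t)).fderiv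
  have hAt_eq : ∀ t : ℝ, fderiv ℝ (gA α) (β α t) = At t :=
    fun t => (hKb α (β α t)).fderiv
  -- derivative of D in t
  have hD' : ∀ t : ℝ, HasDerivAt D
      ((fderiv ℝ (fderiv ℝ B) (α, t) ((0 : XEsp n), (1 : ℝ))).comp (inl ℝ (XEsp n) ℝ)) t := by
    intro t
    have h1 : HasDerivAt (fun s => fderiv ℝ B (α, s))
        (fderiv ℝ (fderiv ℝ B) (α, t) ((0 : XEsp n), (1 : ℝ))) t :=
      (hΦdiff (α, t)).hasFDerivAt.comp_hasDerivAt t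
        ((hasDerivAt_const t α).prodMk (hasDerivAt_id t))
    exact ((ContinuousLinearMap.compL ℝ (XEsp n) (XEsp n × ℝ) (XEsp m)).flip
      (inl ℝ (XEsp n) ℝ)).hasFDerivAt.comp_hasDerivAt t h1
  -- variational equation via symmetry of second derivative
  have hGsym : ∀ t ∈ Set.Icc (0:ℝ) T,
      HasFDerivAt (fun a : XEsp n => gA a (β a t))
        ((fderiv ℝ (fderiv ℝ B) (α, t) ((0 : XEsp n), (1 : ℝ))).comp (inl ℝ (XEsp n) ℝ)) α := by
    intro t ht
    have hfun : (fun a : XEsp n => gA a (β a t))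
        = fun a : XEsp n => fderiv ℝ B (a, t) ((0 : XEsp n), (1 : ℝ)) :=
      funext fun a => hflow' a t ht
    rw [hfun]
    have h1 : HasFDerivAt (fun a : XEsp n => fderiv ℝ B (a, t))
        ((fderiv ℝ (fderiv ℝ B) (α, t)).comp (inl ℝ (XEsp n) ℝ)) α :=
      by have h := (hΦdiff (α, t)).hasFDerivAt.comp α (hasFDerivAt_prodMk_left (𝕜 := ℝ) α t); exact h
    have h2 := (ContinuousLinearMap.apply ℝ (XEsp m) ((0 : XEsp n), (1 : ℝ))).hasFDerivAt.comp α h1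
    have hsymm : IsSymmSndFDerivAt ℝ B (α, t) :=
      hB.contDiffAt.isSymmSndFDerivAt (by simp)
    refine h2.congr_fderiv (Eq.symm ?_)
    refine ContinuousLinearMap.ext fun v => ?_
    simpa using hsymm ((0 : XEsp n), (1 : ℝ)) (v, (0 : ℝ))
  -- chain rule form of the same derivative
  have hchain : ∀ t : ℝ, HasFDerivAt (fun a : XEsp n => gA a (β a t))
      ((fderiv ℝ K (α, β α t)).comp ((ContinuousLinearMap.id ℝ (XEsp n)).prod (D t))) α := by
    intro t
    have h1 : HasFDerivAt (fun a : XEsp n => ((a, β a t) : XEsp n × XEsp m))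
        ((ContinuousLinearMap.id ℝ (XEsp n)).prod (D t)) α :=
      (hasFDerivAt_id α).prodMk (hDt t)
    have h := (hKdiff (α, β α t)).hasFDerivAt.comp α h1; exact h
  -- D satisfies the variational ODE
  have hDode : ∀ t ∈ Set.Icc (0:ℝ) T, HasDerivAt D ((At t).comp (D t) + Ht t) t := by
    intro t ht
    have h1 : (fderiv ℝ (fderiv ℝ B) (α, t) ((0 : XEsp n), (1 : ℝ))).comp (inl ℝ (XEsp n) ℝ)
        = (fderiv ℝ K (α, β α t)).comp ((ContinuousLinearMap.id ℝ (XEsp n)).prod (D t)) :=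
      (hGsym t ht).unique (hchain t)
    have h2 : (fderiv ℝ K (α, β α t)).comp ((ContinuousLinearMap.id ℝ (XEsp n)).prod (D t))
        = (At t).comp (D t) + Ht t := by
      refine ContinuousLinearMap.ext fun v => ?_
      have hv : ((v : XEsp n), D t v) = ((0 : XEsp n), D t v) + (v, (0 : XEsp m)) := by simp
      simp only [ContinuousLinearMap.comp_apply, ContinuousLinearMap.add_apply,
        ContinuousLinearMap.prod_apply, ContinuousLinearMap.id_apply,
        ContinuousLinearMap.inl_apply, ContinuousLinearMap.inr_apply]
      rw [hv, map_add]
      abel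
    have h3 := hD' t
    rw [h1, h2] at h3
    exact h3
  -- adjoint pairing
  set Fl : ℝ → (XEsp n →L[ℝ] ℝ) := fun t => (lam t).comp (D t) with hFldef
  have hFl' : ∀ t ∈ Set.Icc (0:ℝ) T, HasDerivAt Fl ((lam t).comp (Ht t)) t := by
    intro t ht
    have hl := hadj t ht
    rw [hAt_eq t] at hl
    have h1 := hl.clm_comp (hDode t ht)
    have h2 : (-(lam t).comp (At t)).comp (D t) + (lam t).comp ((At t).comp (D t) + Ht t)
        = (lam t).comp (Ht t) := by
      refine ContinuousLinearMap.ext fun v => ?_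
      simp only [ContinuousLinearMap.add_apply, ContinuousLinearMap.comp_apply,
        ContinuousLinearMap.neg_apply, map_add]
      ring
    rw [h2] at h1
    exact h1
  -- continuity and integrability
  have hβαcont : Continuous (β α) := by
    have h : Continuous fun t : ℝ => B (α, t) :=
      hB.continuous.comp (continuous_const.prodMk continuous_id)
    exact h
  have hHtcont : Continuous Ht := by
    have h1 : Continuous fun t : ℝ => fderiv ℝ K (α, β α t) :=
      (hK.continuous_fderiv one_ne_zero).comp (continuous_const.prodMk hβαcont)
    exact (((ContinuousLinearMap.compL ℝ (XEsp n) (XEsp n × XEsp m) (XEsp m)).flip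
      (inl ℝ (XEsp n) (XEsp m))).continuous).comp h1
  have hlamcont : ContinuousOn lam (Set.Icc (0:ℝ) T) :=
    fun t ht => ((hadj t ht).continuousAt).continuousWithinAt
  have hint : IntervalIntegrable (fun t => (lam t).comp (Ht t)) MeasureTheory.volume 0 T := by
    apply ContinuousOn.intervalIntegrable
    rw [Set.uIcc_of_le hT0]
    exact hlamcont.clm_comp hHtcont.continuousOn
  have hFTC : ∫ t in (0:ℝ)..T, (lam t).comp (Ht t) = Fl T - Fl 0 :=
    intervalIntegral.integral_eq_sub_of_hasDerivAt
      (fun t ht => hFl' t (by rwa [Set.uIcc_of_le hT0] at ht)) hint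
  -- endpoints
  have hD0 : D 0 = 0 := by
    have h1 : HasFDerivAt (fun a : XEsp n => β a 0) (0 : XEsp n →L[ℝ] XEsp m) α := by
      have h : (fun a : XEsp n => β a 0) = fun _ => (0 : XEsp m) := funext hinit
      rw [h]
      exact hasFDerivAt_const 0 α
    exact (hDt 0).unique h1
  have hFl0 : Fl 0 = 0 := by
    show (lam 0).comp (D 0) = 0
    rw [hD0, ContinuousLinearMap.comp_zero]
  -- assembling the final identity
  have hUDdiff : Differentiable ℝ (Function.uncurry uD) := huD.differentiable two_ne_zero
  have hL : HasFDerivAt (fun a : XEsp n => uD a (β a T))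
      ((fderiv ℝ (Function.uncurry uD) (α, β α T)).comp
        ((ContinuousLinearMap.id ℝ (XEsp n)).prod (D T))) α :=
    by have h := (hUDdiff (α, β α T)).hasFDerivAt.comp α ((hasFDerivAt_id α).prodMk (hDt T)); exact h
  have hpart1 : fderiv ℝ (fun a : XEsp n => uD a (β α T)) α
      = (fderiv ℝ (Function.uncurry uD) (α, β α T)).comp (inl ℝ (XEsp n) (XEsp m)) :=
    by have h := ((hUDdiff (α, β α T)).hasFDerivAt.comp α (hasFDerivAt_prodMk_left (𝕜 := ℝ) α (β α T))).fderiv; exact h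
  have hpart2 : fderiv ℝ (uD α) (β α T)
      = (fderiv ℝ (Function.uncurry uD) (α, β α T)).comp (inr ℝ (XEsp n) (XEsp m)) :=
    by have h := ((hUDdiff (α, β α T)).hasFDerivAt.comp (β α T) (hasFDerivAt_prodMk_right (𝕜 := ℝ) α (β α T))).fderiv; exact h
  have hInt2 : (∫ t in (0:ℝ)..T, (lam t).comp (fderiv ℝ (fun a => gA a (β α t)) α))
      = Fl T - Fl 0 := by
    rw [← hFTC]
    simp only [hHt_eq]
  have hFlT : Fl T = -(((fderiv ℝ (Function.uncurry uD) (α, β α T)).comp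
      (inr ℝ (XEsp n) (XEsp m))).comp (D T)) := by
    show (lam T).comp (D T) = _
    rw [hterm, hpart2, ContinuousLinearMap.neg_comp]
  rw [hL.fderiv, hpart1, hInt2, hFl0, sub_zero, hFlT, sub_neg_eq_add]
  refine ContinuousLinearMap.ext fun v => ?_
  have hv : ((v : XEsp n), D T v) = (v, (0 : XEsp m)) + ((0 : XEsp n), D T v) := by simp
  simp only [ContinuousLinearMap.add_apply, ContinuousLinearMap.comp_apply,
    ContinuousLinearMap.prod_apply, ContinuousLinearMap.id_apply,
    ContinuousLinearMap.inl_apply, ContinuousLinearMap.inr_apply]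
  rw [hv, map_add]
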